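/- Let m = (m^0, m^1) be a factor map from a topological graph F to a topological graph E. If U ⊆ E^1 is an open set such that the restriction of d_E to U is a homeomorphism onto the open set d_E(U) ⊆ E^0, then the restriction of d_F to the open set (m^1)^{-1}(U) ⊆ F^1 is a homeomorphism onto the open set (m^0)^{-1}(d_E(U)) ⊆ F^0. -/

import Mathlib

open Set Filter OnePoint

namespace TopGraphAux

/-- `E⁰_sce`: the open set of sources of a topological graph. -/
def graphSce {E0 E1 : Type*} [TopologicalSpace E0] (r : E1 → E0) : Set E0 :=
  (closure (Set.range r))ᶜ

/-- `E⁰_fin`: vertices having a neighborhood whose `r`-preimage is compact. -/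
def graphFin {E0 E1 : Type*} [TopologicalSpace E0] [TopologicalSpace E1] (r : E1 → E0) :
    Set E0 :=
  {v | ∃ V ∈ nhds v, IsCompact (r ⁻¹' V)}

/-- `E⁰_rg`: the open set of regular vertices of a topological graph. -/
def graphRg {E0 E1 : Type*} [TopologicalSpace E0] [TopologicalSpace E1] (r : E1 → E0) :
    Set E0 :=
  graphFin r \ closure (graphSce r)

/-- A factor map from the topological graph `F = (F0, F1, dF, rF)` to the topological graph
`E = (E0, E1, dE, rE)`: a pair of continuous maps between one-point compactifications sending
`∞` to `∞`, intertwining range and domain maps, and with the unique edge-lifting property. -/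
structure IsFactorMap {E0 E1 F0 F1 : Type*}
    [TopologicalSpace E0] [TopologicalSpace E1] [TopologicalSpace F0] [TopologicalSpace F1]
    (dE rE : E1 → E0) (dF rF : F1 → F0)
    (m0 : OnePoint F0 → OnePoint E0) (m1 : OnePoint F1 → OnePoint E1) : Prop where
  continuous_m0 : Continuous m0
  continuous_m1 : Continuous m1
  map_infty0 : m0 ∞ = ∞
  map_infty1 : m1 ∞ = ∞
  compat : ∀ (e : F1) (e' : E1), m1 ↑e = ↑e' →
    (↑(rE e') : OnePoint E0) = m0 ↑(rF e) ∧ (↑(dE e') : OnePoint E0) = m0 ↑(dF e)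
  lift : ∀ (e' : E1) (v : F0), (↑(dE e') : OnePoint E0) = m0 ↑v →
    ∃! e : F1, m1 ↑e = (↑e' : OnePoint E1) ∧ dF e = v

/-- Regularity of a factor map: every vertex mapping to a regular vertex receives an edge,
and all edges it receives are mapped to genuine edges. -/
def IsRegularFactorMap {E0 E1 F0 F1 : Type*}
    [TopologicalSpace E0] [TopologicalSpace E1] [TopologicalSpace F0] [TopologicalSpace F1]
    (rE : E1 → E0) (rF : F1 → F0)
    (m0 : OnePoint F0 → OnePoint E0) (m1 : OnePoint F1 → OnePoint E1) : Prop :=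
  ∀ (v : F0) (w : E0), m0 ↑v = ↑w → w ∈ graphRg rE →
    (∃ e : F1, rF e = v) ∧ ∀ e : F1, rF e = v → ∃ e' : E1, m1 ↑e = ↑e'

/-- `f` restricts to a homeomorphism from `U` onto `V`. -/
def IsHomeoOn {X Y : Type*} [TopologicalSpace X] [TopologicalSpace Y]
    (f : X → Y) (U : Set X) (V : Set Y) : Prop :=
  ∃ h : U ≃ₜ V, ∀ x : U, (h x : Y) = f (x : X)

/-- Extension of a map `A → OnePoint B` to the one-point compactification, sending `∞` to `∞`. -/
def onePointLift {A B : Type*} (f : A → OnePoint B) : OnePoint A → OnePoint B :=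
  fun x => Option.elim x ∞ f

/-- The relation identifying the copy in `S` of each point of `B ⊆ S` with the corresponding
point of `X`. -/
def glueRel {X : Type*} (S B : Set X) : (X ⊕ ↥S) → (X ⊕ ↥S) → Prop :=
  fun a b => ∃ x : ↥S, (x : X) ∈ B ∧
    ((a = Sum.inl ↑x ∧ b = Sum.inr x) ∨ (a = Sum.inr x ∧ b = Sum.inl ↑x))

/-- The space `X ⨿_B S` obtained from `X ⊔ S` by identifying the two copies of each point
of `B ⊆ S ⊆ X`. -/
def Glue (X : Type*) (S B : Set X) : Type _ := Quot (glueRel S B)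

instance {X : Type*} [TopologicalSpace X] (S B : Set X) : TopologicalSpace (Glue X S B) :=
  inferInstanceAs (TopologicalSpace (Quot _))

/-- The canonical inclusion `X → X ⨿_B S`. -/
def Glue.inl {X : Type*} {S B : Set X} (x : X) : Glue X S B := Quot.mk _ (Sum.inl x)

/-- The inclusion of the extra copy `S → X ⨿_B S`. -/
def Glue.inr {X : Type*} {S B : Set X} (x : ↥S) : Glue X S B := Quot.mk _ (Sum.inr x)

/-- The extension `d_Y` of the domain map `d` to the graph `E_Y`. -/
def glueD {E0 E1 : Type*} [TopologicalSpace E0] (d : E1 → E0) (Y : Set E0) :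
    Glue E1 (d ⁻¹' closure Y) (d ⁻¹' (closure Y \ Y)) → Glue E0 (closure Y) (closure Y \ Y) :=
  Quot.lift
    (Sum.elim (fun e => Glue.inl (d e)) (fun e => Glue.inr ⟨d e.1, e.2⟩))
    (by
      rintro a b ⟨x, hx, (⟨rfl, rfl⟩ | ⟨rfl, rfl⟩)⟩
      · exact Quot.sound ⟨⟨d x.1, x.2⟩, hx, Or.inl ⟨rfl, rfl⟩⟩
      · exact (Quot.sound ⟨⟨d x.1, x.2⟩, hx, Or.inl ⟨rfl, rfl⟩⟩).symm)

/-- The extension `r_Y` of the range map `r` to the graph `E_Y`. -/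
def glueR {E0 E1 : Type*} [TopologicalSpace E0] (d r : E1 → E0) (Y : Set E0) :
    Glue E1 (d ⁻¹' closure Y) (d ⁻¹' (closure Y \ Y)) → Glue E0 (closure Y) (closure Y \ Y) :=
  Quot.lift (Sum.elim (fun e => Glue.inl (r e)) (fun e => Glue.inl (r e.1)))
    (by rintro a b ⟨x, hx, (⟨rfl, rfl⟩ | ⟨rfl, rfl⟩)⟩ <;> rfl)

/-- The projection from the glued space back onto the original space. -/
def glueProj {X : Type*} (S B : Set X) : Glue X S B → X :=
  Quot.lift (Sum.elim id Subtype.val)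
    (by rintro a b ⟨x, hx, (⟨rfl, rfl⟩ | ⟨rfl, rfl⟩)⟩ <;> rfl)

/-- A point of the projective limit `E^i = Ẽ^i \ {∞}`: a compatible thread of points of the
one-point compactifications, not all equal to `∞`. -/
structure LimPt {Λ : Type*} [Preorder Λ] (X : Λ → Type*)
    (m : ∀ ⦃l l' : Λ⦄, l ≤ l' → OnePoint (X l') → OnePoint (X l)) where
  pt : ∀ l, OnePoint (X l)
  compat : ∀ ⦃l l' : Λ⦄ (h : l ≤ l'), m h (pt l') = pt l
  exists_ne_infty : ∃ l, pt l ≠ ∞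

instance {Λ : Type*} [Preorder Λ] (X : Λ → Type*) [∀ l, TopologicalSpace (X l)]
    (m : ∀ ⦃l l' : Λ⦄, l ≤ l' → OnePoint (X l') → OnePoint (X l)) :
    TopologicalSpace (LimPt X m) :=
  TopologicalSpace.induced LimPt.pt inferInstance

/-- Topological freeness: the set of base points of loops without entrances has empty
interior. -/
def IsTopologicallyFree {E0 E1 : Type*} [TopologicalSpace E0] (d r : E1 → E0) : Prop :=
  interior {v : E0 | ∃ (n : ℕ) (hn : 0 < n) (e : Fin n → E1),
      (∀ k : Fin n, d (e k) = r (e ⟨(k.1 + 1) % n, Nat.mod_lt _ hn⟩)) ∧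
      (∀ (k : Fin n) (e' : E1), r e' = r (e k) → e' = e k) ∧
      r (e ⟨0, hn⟩) = v} = ∅

open scoped Classical in
/-- Partial iteration of a partially defined map `σ` with domain `W`:
`sgdsIter σ n x = some y` iff `x ∈ dom (σ^n)` and `σ^n x = y`. -/
noncomputable def sgdsIter {X : Type*} {W : Set X} (σ : ↥W → X) : ℕ → X → Option X
  | 0, x => Option.some x
  | n + 1, x => if h : x ∈ W then sgdsIter σ n (σ ⟨x, h⟩) else none


/-- If a factor map `m : F → E` is given and `d_E` restricts to a
homeomorphism from an open set `U ⊆ E¹` onto the open set `d_E(U) ⊆ E⁰`, then `d_F`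
restricts to a homeomorphism from the open set `(m¹)⁻¹(U) ⊆ F¹` onto the open set
`(m⁰)⁻¹(d_E(U)) ⊆ F⁰`. -/
theorem statement4
    {E0 E1 F0 F1 : Type*}
    [TopologicalSpace E0] [TopologicalSpace E1] [T2Space E0] [T2Space E1]
    [LocallyCompactSpace E0] [LocallyCompactSpace E1]
    [TopologicalSpace F0] [TopologicalSpace F1] [T2Space F0] [T2Space F1]
    [LocallyCompactSpace F0] [LocallyCompactSpace F1]
    (dE rE : E1 → E0) (hdE : IsLocalHomeomorph dE) (hrE : Continuous rE)
    (dF rF : F1 → F0) (hdF : IsLocalHomeomorph dF) (hrF : Continuous rF)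
    (m0 : OnePoint F0 → OnePoint E0) (m1 : OnePoint F1 → OnePoint E1)
    (hm : IsFactorMap dE rE dF rF m0 m1)
    (U : Set E1) (hU : IsOpen U) (hdU : IsOpen (dE '' U))
    (hhomeo : IsHomeoOn dE U (dE '' U)) :
    IsOpen {e : F1 | ∃ u ∈ U, m1 ↑e = ↑u} ∧
    IsOpen {v : F0 | ∃ w ∈ dE '' U, m0 ↑v = ↑w} ∧
    IsHomeoOn dF {e : F1 | ∃ u ∈ U, m1 ↑e = ↑u} {v : F0 | ∃ w ∈ dE '' U, m0 ↑v = ↑w} := by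
  set U' : Set F1 := {e : F1 | ∃ u ∈ U, m1 ↑e = ↑u} with hU'def
  set V' : Set F0 := {v : F0 | ∃ w ∈ dE '' U, m0 ↑v = ↑w} with hV'def
  -- injectivity of dE on U
  have hdEinj : ∀ u₁ ∈ U, ∀ u₂ ∈ U, dE u₁ = dE u₂ → u₁ = u₂ := by
    obtain ⟨h, hh⟩ := hhomeo
    intro u₁ h₁ u₂ h₂ heq
    have : h ⟨u₁, h₁⟩ = h ⟨u₂, h₂⟩ := by
      ext; rw [hh, hh]; exact heq
    simpa using congrArg Subtype.val (h.injective this)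
  have hU'eq : U' = (fun e : F1 => m1 ↑e) ⁻¹' ((↑) '' U) := by
    ext e; simp [hU'def, eq_comm]
  have hV'eq : V' = (fun v : F0 => m0 ↑v) ⁻¹' ((↑) '' (dE '' U)) := by
    ext v; simp [hV'def, eq_comm]
  have hU'open : IsOpen U' := by
    rw [hU'eq]
    exact (OnePoint.isOpenMap_coe _ hU).preimage
      (hm.continuous_m1.comp OnePoint.continuous_coe)
  have hV'open : IsOpen V' := by
    rw [hV'eq]
    exact (OnePoint.isOpenMap_coe _ hdU).preimage
      (hm.continuous_m0.comp OnePoint.continuous_coe)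
  refine ⟨hU'open, hV'open, ?_⟩
  -- dF maps U' into V'
  have hmaps : ∀ e ∈ U', dF e ∈ V' := by
    rintro e ⟨u, hu, hme⟩
    exact ⟨dE u, ⟨u, hu, rfl⟩, ((hm.compat e u hme).2).symm⟩
  -- injectivity of dF on U'
  have hinj : ∀ e₁ ∈ U', ∀ e₂ ∈ U', dF e₁ = dF e₂ → e₁ = e₂ := by
    rintro e₁ ⟨u₁, hu₁, hm₁⟩ e₂ ⟨u₂, hu₂, hm₂⟩ heq
    have hd₁ := (hm.compat e₁ u₁ hm₁).2
    have hd₂ := (hm.compat e₂ u₂ hm₂).2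
    have : (↑(dE u₁) : OnePoint E0) = ↑(dE u₂) := by
      rw [hd₁, hd₂, heq]
    have hu12 : u₁ = u₂ := hdEinj u₁ hu₁ u₂ hu₂ (OnePoint.coe_injective this)
    subst hu12
    obtain ⟨e, _, huniq⟩ := hm.lift u₁ (dF e₁) hd₁
    rw [huniq e₁ ⟨hm₁, rfl⟩, huniq e₂ ⟨hm₂, heq.symm⟩]
  -- surjectivity onto V'
  have hsurj : ∀ v ∈ V', ∃ e ∈ U', dF e = v := by
    rintro v ⟨w, ⟨u, hu, rfl⟩, hmv⟩
    obtain ⟨e, ⟨hme, hde⟩, -⟩ := hm.lift u v hmv.symm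
    exact ⟨e, ⟨u, hu, hme⟩, hde⟩
  -- build the homeomorphism
  let g : ↥U' → F0 := fun e => dF ↑e
  have hg : Topology.IsOpenEmbedding g :=
    Topology.IsOpenEmbedding.of_continuous_injective_isOpenMap
      (hdF.continuous.comp continuous_subtype_val)
      (fun a b hab => Subtype.ext (hinj a a.2 b b.2 hab))
      (hdF.isOpenMap.restrict hU'open)
  have hrange : Set.range g = V' := by
    apply Set.eq_of_subset_of_subset
    · rintro _ ⟨e, rfl⟩; exact hmaps e e.2
    · rintro v hv
      obtain ⟨e, he, hde⟩ := hsurj v hv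
      exact ⟨⟨e, he⟩, hde⟩
  exact ⟨(Topology.IsEmbedding.toHomeomorph (f := g) hg.isEmbedding).trans (Homeomorph.setCongr hrange),
    fun x => rfl⟩


end TopGraphAux
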